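/- Let k ≥ 1 and let μ, ν be fractional configurations of mass k on the line. Then the integral over ω ∈ (0, 1] of the total coordinatewise displacement of the rounded configurations equals the L¹ distance of the cumulative mass functions: ∫_{(0,1]} ∑_{j=0}^{k−1} |f_μ(ω + j) − f_ν(ω + j)| dω = ∫_ℝ |F_μ(x) − F_ν(x)| dx. -/

import Mathlib

open MeasureTheory

/-- The cumulative mass function `F_μ(x) = ∑_{y ≤ x} μ(y)` of a finitely
supported mass function `μ` on the line. -/
noncomputable def cumMass (μ : ℝ →₀ ℝ) (x : ℝ) : ℝ :=
  ∑ y ∈ μ.support.filter (fun y => y ≤ x), μ y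

/-- The quantile function `f_μ(y)`: the least point of the support of `μ` whose
cumulative mass is at least `y`. -/
noncomputable def quantile (μ : ℝ →₀ ℝ) (y : ℝ) : ℝ :=
  sInf {x | x ∈ μ.support ∧ y ≤ cumMass μ x}

section Aux

variable {k : ℕ} {μ : ℝ →₀ ℝ}

lemma cumMass_mono (hμ0 : ∀ x, 0 ≤ μ x) : Monotone (cumMass μ) := by
  intro a b hab
  apply Finset.sum_le_sum_of_subset_of_nonneg
  · intro z hz
    rw [Finset.mem_filter] at hz ⊢
    exact ⟨hz.1, hz.2.trans hab⟩
  · exact fun i _ _ => hμ0 i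

lemma cumMass_nonneg (hμ0 : ∀ x, 0 ≤ μ x) (x : ℝ) : 0 ≤ cumMass μ x :=
  Finset.sum_nonneg fun i _ => hμ0 i

lemma cumMass_le (hμ0 : ∀ x, 0 ≤ μ x)
    (hμk : ∑ x ∈ μ.support, μ x = (k : ℝ)) (x : ℝ) : cumMass μ x ≤ k := by
  rw [← hμk]
  exact Finset.sum_le_sum_of_subset_of_nonneg (Finset.filter_subset _ _)
    (fun i _ _ => hμ0 i)

lemma support_nonempty (hk : 1 ≤ k)
    (hμk : ∑ x ∈ μ.support, μ x = (k : ℝ)) : μ.support.Nonempty := by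
  rw [Finset.nonempty_iff_ne_empty]
  intro h
  rw [h, Finset.sum_empty] at hμk
  have : (1 : ℝ) ≤ (k : ℝ) := by exact_mod_cast hk
  linarith

lemma cumMass_max' (hμk : ∑ x ∈ μ.support, μ x = (k : ℝ))
    (h : μ.support.Nonempty) : cumMass μ (μ.support.max' h) = k := by
  rw [cumMass, Finset.filter_true_of_mem (fun z hz => Finset.le_max' _ z hz), hμk]

lemma qSet_finite (μ : ℝ →₀ ℝ) (y : ℝ) :
    {x | x ∈ μ.support ∧ y ≤ cumMass μ x}.Finite :=
  Set.Finite.subset μ.support.finite_toSet (fun x hx => hx.1)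

lemma qSet_nonempty (hk : 1 ≤ k) (hμk : ∑ x ∈ μ.support, μ x = (k : ℝ))
    {y : ℝ} (hy : y ≤ k) :
    {x | x ∈ μ.support ∧ y ≤ cumMass μ x}.Nonempty := by
  have h := support_nonempty hk hμk
  exact ⟨μ.support.max' h, μ.support.max'_mem h, by rw [cumMass_max' hμk h]; exact hy⟩

lemma quantile_mem (hk : 1 ≤ k) (hμk : ∑ x ∈ μ.support, μ x = (k : ℝ))
    {y : ℝ} (hy : y ≤ k) :
    quantile μ y ∈ μ.support ∧ y ≤ cumMass μ (quantile μ y) :=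
  (qSet_nonempty hk hμk hy).csInf_mem (qSet_finite μ y)

lemma quantile_le_iff (hk : 1 ≤ k) (hμ0 : ∀ x, 0 ≤ μ x)
    (hμk : ∑ x ∈ μ.support, μ x = (k : ℝ)) {y x : ℝ} (hy0 : 0 < y) (hyk : y ≤ k) :
    quantile μ y ≤ x ↔ y ≤ cumMass μ x := by
  constructor
  · intro h
    exact le_trans (quantile_mem hk hμk hyk).2 (cumMass_mono hμ0 h)
  · intro h
    have hT : (μ.support.filter (fun z => z ≤ x)).Nonempty := by
      rw [Finset.filter_nonempty_iff]
      by_contra hc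
      push_neg at hc
      have : cumMass μ x = 0 := by
        rw [cumMass, Finset.filter_false_of_mem (fun z hz => not_le.2 (hc z hz)), Finset.sum_empty]
      rw [this] at h; linarith
    have hx'mem := (μ.support.filter (fun z => z ≤ x)).max'_mem hT
    set x' := (μ.support.filter (fun z => z ≤ x)).max' hT with hx'
    rw [Finset.mem_filter] at hx'mem
    have hfe : μ.support.filter (fun z => z ≤ x') = μ.support.filter (fun z => z ≤ x) := by
      apply Finset.filter_congr
      intro z hz
      constructor
      · exact fun hzx' => le_trans hzx' hx'mem.2
      · intro hzx
        rw [hx']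
        have hmem : z ∈ μ.support.filter (fun w => w ≤ x) :=
          Finset.mem_filter.mpr ⟨hz, hzx⟩
        exact Finset.le_max' _ z hmem
    have hx'cum : y ≤ cumMass μ x' := by
      rw [cumMass, hfe]; exact h
    have : quantile μ y ≤ x' := by
      apply csInf_le ((qSet_finite μ y).bddBelow)
      exact ⟨hx'mem.1, hx'cum⟩
    exact le_trans this hx'mem.2

lemma quantile_min_mem_support (hk : 1 ≤ k)
    (hμk : ∑ x ∈ μ.support, μ x = (k : ℝ)) (y : ℝ) :
    quantile μ (min y k) ∈ μ.support :=
  (quantile_mem hk hμk (min_le_right _ _)).1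

lemma quantile_min_monotone (hk : 1 ≤ k)
    (hμk : ∑ x ∈ μ.support, μ x = (k : ℝ)) :
    Monotone (fun y => quantile μ (min y (k : ℝ))) := by
  intro a b hab
  apply csInf_le_csInf ((qSet_finite μ _).bddBelow)
    (qSet_nonempty hk hμk (min_le_right _ _))
  intro z hz
  exact ⟨hz.1, le_trans (min_le_min_right _ hab) hz.2⟩

lemma setOf_not_iff_le_Ioc (a b K : ℝ) (hab : a ≤ b) (ha : 0 ≤ a) (hb : b ≤ K) :
    {y : ℝ | y ∈ Set.Ioc (0:ℝ) K ∧ ¬((y ≤ a) ↔ (y ≤ b))} = Set.Ioc a b := by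
  ext y
  simp only [Set.mem_setOf_eq, Set.mem_Ioc]
  constructor
  · rintro ⟨⟨h0, hK⟩, h⟩
    by_cases h1 : y ≤ a
    · exact absurd (iff_of_true h1 (h1.trans hab)) h
    · push_neg at h1
      refine ⟨h1, ?_⟩
      by_contra h2
      push_neg at h2
      exact h (iff_of_false (not_le.2 h1) (not_le.2 h2))
  · rintro ⟨h1, h2⟩
    exact ⟨⟨ha.trans_lt h1, h2.trans hb⟩, fun h => absurd (h.mpr h2) (not_le.2 h1)⟩

lemma setOf_not_iff_le_Ico (a b : ℝ) (hab : a ≤ b) :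
    {x : ℝ | ¬((a ≤ x) ↔ (b ≤ x))} = Set.Ico a b := by
  ext x
  simp only [Set.mem_setOf_eq, Set.mem_Ico]
  constructor
  · intro h
    by_cases h1 : a ≤ x
    · refine ⟨h1, ?_⟩
      by_contra h2
      push_neg at h2
      exact h (iff_of_true h1 h2)
    · exact absurd (iff_of_false h1 (fun hb => h1 (hab.trans hb))) h
  · rintro ⟨h1, h2⟩
    exact fun h => absurd (h.mp h1) (not_le.2 h2)

lemma integrableOn_of_bounded {f : ℝ → ℝ} (hf : Measurable f) {C : ℝ}
    (hC : ∀ x, |f x| ≤ C) {s : Set ℝ} (hs : volume s < ⊤) :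
    IntegrableOn f s := by
  have hconst : IntegrableOn (fun _ : ℝ => C) s := by
    rw [integrableOn_const_iff (C := C)]
    exact Or.inr hs
  exact hconst.mono' hf.aestronglyMeasurable
    (Filter.Eventually.of_forall fun x => by simpa using hC x)

end Aux

/-- for fractional configurations `μ, ν` of mass `k` on the line,
the integral over `ω ∈ (0, 1]` of the total coordinatewise displacement of the
rounded configurations equals the `L¹` distance of the cumulative mass
functions. -/
theorem integral_rounded_displacement_eq_L1_cumMass {k : ℕ} (hk : 1 ≤ k)
    (μ ν : ℝ →₀ ℝ) (hμ0 : ∀ x, 0 ≤ μ x) (hν0 : ∀ x, 0 ≤ ν x)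
    (hμk : ∑ x ∈ μ.support, μ x = k) (hνk : ∑ x ∈ ν.support, ν x = k) :
    ∫ ω in Set.Ioc (0 : ℝ) 1,
        ∑ j : Fin k, |quantile μ (ω + (j : ℕ)) - quantile ν (ω + (j : ℕ))| =
      ∫ x : ℝ, |cumMass μ x - cumMass ν x| := by
  have hmμ : Measurable (cumMass μ) := (cumMass_mono hμ0).measurable
  have hmν : Measurable (cumMass ν) := (cumMass_mono hν0).measurable
  set G : ℝ → ℝ := fun y => |quantile μ (min y (k:ℝ)) - quantile ν (min y (k:ℝ))|
    with hGdef
  have hGmeas : Measurable G :=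
    ((quantile_min_monotone hk hμk).measurable.sub
      (quantile_min_monotone hk hνk).measurable).abs
  have hGnonneg : ∀ y, 0 ≤ G y := fun y => abs_nonneg _
  -- a uniform bound on G
  obtain ⟨C, hC⟩ : ∃ C, ∀ y, |G y| ≤ C := by
    have hμne := support_nonempty hk hμk
    have hνne := support_nonempty hk hνk
    refine ⟨μ.support.sup' hμne (fun z => |z|) + ν.support.sup' hνne (fun z => |z|),
      fun y => ?_⟩
    have h1 : |quantile μ (min y (k:ℝ))| ≤ μ.support.sup' hμne (fun z => |z|) :=
      Finset.le_sup' _ (quantile_min_mem_support hk hμk y)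
    have h2 : |quantile ν (min y (k:ℝ))| ≤ ν.support.sup' hνne (fun z => |z|) :=
      Finset.le_sup' _ (quantile_min_mem_support hk hνk y)
    calc |G y| = G y := abs_of_nonneg (hGnonneg y)
    _ ≤ |quantile μ (min y (k:ℝ))| + |quantile ν (min y (k:ℝ))| := abs_sub _ _
    _ ≤ _ := add_le_add h1 h2
  have hGint : ∀ s : Set ℝ, volume s < ⊤ → IntegrableOn G s :=
    fun s hs => integrableOn_of_bounded hGmeas hC hs
  -- Step A : the LHS equals ∫ y in Ioc 0 k, G y
  have stepA : (∫ ω in Set.Ioc (0 : ℝ) 1,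
        ∑ j : Fin k, |quantile μ (ω + (j : ℕ)) - quantile ν (ω + (j : ℕ))|)
      = ∫ y in Set.Ioc (0:ℝ) (k:ℝ), G y := by
    have hGii : ∀ a b : ℝ, IntervalIntegrable G volume a b := by
      intro a b
      rw [intervalIntegrable_iff]
      apply hGint
      rw [Set.uIoc, Real.volume_Ioc]
      exact ENNReal.ofReal_lt_top
    have hcongr : Set.EqOn
        (fun ω => ∑ j : Fin k, |quantile μ (ω + (j : ℕ)) - quantile ν (ω + (j : ℕ))|)
        (fun ω => ∑ j : Fin k, G (ω + (j : ℕ))) (Set.Ioc (0:ℝ) 1) := by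
      intro ω hω
      simp only
      apply Finset.sum_congr rfl
      intro j _
      have hj : ((j : ℕ) : ℝ) + 1 ≤ (k : ℝ) := by
        exact_mod_cast Nat.succ_le_of_lt j.2
      have hmin : min (ω + ((j : ℕ) : ℝ)) (k : ℝ) = ω + ((j : ℕ) : ℝ) :=
        min_eq_left (by have := hω.2; linarith)
      rw [hGdef]
      simp only [hmin]
    rw [setIntegral_congr_fun measurableSet_Ioc hcongr]
    have hint : ∀ j : Fin k,
        IntegrableOn (fun ω => G (ω + ((j:ℕ):ℝ))) (Set.Ioc (0:ℝ) 1) := by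
      intro j
      apply integrableOn_of_bounded (C := C)
      · exact hGmeas.comp (measurable_add_const _)
      · exact fun ω => hC _
      · rw [Real.volume_Ioc]; exact ENNReal.ofReal_lt_top
    rw [integral_finset_sum Finset.univ (fun j _ => hint j)]
    have hterm : ∀ j : ℕ, (∫ ω in Set.Ioc (0:ℝ) 1, G (ω + (j:ℝ)))
        = ∫ y in (j:ℝ)..((j:ℝ)+1), G y := by
      intro j
      rw [← intervalIntegral.integral_of_le zero_le_one,
        intervalIntegral.integral_comp_add_right G ((j:ℕ):ℝ), zero_add,
        add_comm (1:ℝ)]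
    calc ∑ j : Fin k, ∫ ω in Set.Ioc (0:ℝ) 1, G (ω + ((j:ℕ):ℝ))
        = ∑ j ∈ Finset.range k, ∫ ω in Set.Ioc (0:ℝ) 1, G (ω + (j:ℝ)) :=
          Fin.sum_univ_eq_sum_range (fun j => ∫ ω in Set.Ioc (0:ℝ) 1, G (ω + (j:ℝ))) k
      _ = ∑ j ∈ Finset.range k, ∫ y in ((fun i : ℕ => (i:ℝ)) j)..((fun i : ℕ => (i:ℝ)) (j+1)), G y := by
          apply Finset.sum_congr rfl
          intro j _
          rw [hterm j]
          norm_num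
      _ = ∫ y in ((fun i : ℕ => (i:ℝ)) 0)..((fun i : ℕ => (i:ℝ)) k), G y :=
          intervalIntegral.sum_integral_adjacent_intervals (fun i _ => hGii _ _)
      _ = ∫ y in Set.Ioc (0:ℝ) (k:ℝ), G y := by
          simp only [Nat.cast_zero]
          exact intervalIntegral.integral_of_le (by positivity)
  -- Step B : lintegral identity via Fubini
  have stepB : (∫⁻ y in Set.Ioc (0:ℝ) (k:ℝ), ENNReal.ofReal (G y))
      = ∫⁻ x, ENNReal.ofReal |cumMass μ x - cumMass ν x| := by
    set S : Set (ℝ × ℝ) := {p | p.2 ∈ Set.Ioc (0:ℝ) (k:ℝ) ∧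
      ¬((p.2 ≤ cumMass μ p.1) ↔ (p.2 ≤ cumMass ν p.1))} with hSdef
    have hA : MeasurableSet {p : ℝ × ℝ | p.2 ≤ cumMass μ p.1} := by
      have h : {p : ℝ × ℝ | p.2 ≤ cumMass μ p.1}
          = (fun p : ℝ × ℝ => cumMass μ p.1 - p.2) ⁻¹' (Set.Ici 0) := by
        ext p; simp [sub_nonneg]
      rw [h]
      exact ((hmμ.comp measurable_fst).sub measurable_snd) measurableSet_Ici
    have hB : MeasurableSet {p : ℝ × ℝ | p.2 ≤ cumMass ν p.1} := by
      have h : {p : ℝ × ℝ | p.2 ≤ cumMass ν p.1}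
          = (fun p : ℝ × ℝ => cumMass ν p.1 - p.2) ⁻¹' (Set.Ici 0) := by
        ext p; simp [sub_nonneg]
      rw [h]
      exact ((hmν.comp measurable_fst).sub measurable_snd) measurableSet_Ici
    have hS : MeasurableSet S := by
      have h : S = (Set.univ ×ˢ Set.Ioc (0:ℝ) (k:ℝ)) ∩
          (({p : ℝ × ℝ | p.2 ≤ cumMass μ p.1} \ {p : ℝ × ℝ | p.2 ≤ cumMass ν p.1}) ∪
           ({p : ℝ × ℝ | p.2 ≤ cumMass ν p.1} \ {p : ℝ × ℝ | p.2 ≤ cumMass μ p.1})) := by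
        ext p
        simp only [hSdef, Set.mem_setOf_eq, Set.mem_inter_iff, Set.mem_prod,
          Set.mem_univ, true_and, Set.mem_union, Set.mem_diff]
        tauto
      rw [h]
      exact (MeasurableSet.univ.prod measurableSet_Ioc).inter
        ((hA.diff hB).union (hB.diff hA))
    have yslice : ∀ y : ℝ, (∫⁻ x, S.indicator (fun _ => (1:ENNReal)) (x, y))
        = (Set.Ioc (0:ℝ) (k:ℝ)).indicator (fun z => ENNReal.ofReal (G z)) y := by
      intro y
      have hrw : (fun x => S.indicator (fun _ => (1:ENNReal)) (x, y))
          = Set.indicator {x | (x, y) ∈ S} (fun _ => (1:ENNReal)) := by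
        ext x
        by_cases h : (x, y) ∈ S <;> simp [Set.indicator_apply, h]
      have hmeas : MeasurableSet {x | (x, y) ∈ S} :=
        hS.preimage measurable_prodMk_right
      rw [hrw, lintegral_indicator hmeas _, setLIntegral_one]
      by_cases hy : y ∈ Set.Ioc (0:ℝ) (k:ℝ)
      · have hmin : min y (k:ℝ) = y := min_eq_left hy.2
        have hGy : G y = |quantile μ y - quantile ν y| := by
          rw [hGdef]; simp only [min_eq_left hy.2]
        have hset : {x | (x, y) ∈ S}
            = {x : ℝ | ¬((quantile μ y ≤ x) ↔ (quantile ν y ≤ x))} := by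
          ext x
          simp only [hSdef, Set.mem_setOf_eq, hy, true_and]
          rw [← quantile_le_iff hk hμ0 hμk hy.1 hy.2,
            ← quantile_le_iff hk hν0 hνk hy.1 hy.2]
        rw [hset, Set.indicator_of_mem hy, hGy]
        rcases le_total (quantile μ y) (quantile ν y) with hle | hle
        · rw [setOf_not_iff_le_Ico _ _ hle, Real.volume_Ico]
          rw [abs_sub_comm, abs_of_nonneg (sub_nonneg.2 hle)]
        · have h2 : {x : ℝ | ¬((quantile μ y ≤ x) ↔ (quantile ν y ≤ x))}
              = {x : ℝ | ¬((quantile ν y ≤ x) ↔ (quantile μ y ≤ x))} := by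
            ext x; simp [iff_comm]
          rw [h2, setOf_not_iff_le_Ico _ _ hle, Real.volume_Ico]
          rw [abs_of_nonneg (sub_nonneg.2 hle)]
      · have hset : {x | (x, y) ∈ S} = ∅ := by
          ext x
          simp only [hSdef, Set.mem_setOf_eq, Set.mem_empty_iff_false, iff_false]
          exact fun h => hy h.1
        rw [hset, Set.indicator_of_notMem hy, measure_empty]
    have xslice : ∀ x : ℝ, (∫⁻ y, S.indicator (fun _ => (1:ENNReal)) (x, y))
        = ENNReal.ofReal |cumMass μ x - cumMass ν x| := by
      intro x
      have hrw : (fun y => S.indicator (fun _ => (1:ENNReal)) (x, y))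
          = Set.indicator {y | (x, y) ∈ S} (fun _ => (1:ENNReal)) := by
        ext y
        by_cases h : (x, y) ∈ S <;> simp [Set.indicator_apply, h]
      have hmeas : MeasurableSet {y | (x, y) ∈ S} :=
        hS.preimage measurable_prodMk_left
      rw [hrw, lintegral_indicator hmeas _, setLIntegral_one]
      have hbase : {y | (x, y) ∈ S} = {y : ℝ | y ∈ Set.Ioc (0:ℝ) (k:ℝ) ∧
          ¬((y ≤ cumMass μ x) ↔ (y ≤ cumMass ν x))} := rfl
      rcases le_total (cumMass μ x) (cumMass ν x) with hle | hle
      · rw [hbase, setOf_not_iff_le_Ioc _ _ _ hle (cumMass_nonneg hμ0 x)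
          (cumMass_le hν0 hνk x), Real.volume_Ioc]
        rw [abs_sub_comm, abs_of_nonneg (sub_nonneg.2 hle)]
      · have h2 : {y : ℝ | y ∈ Set.Ioc (0:ℝ) (k:ℝ) ∧
            ¬((y ≤ cumMass μ x) ↔ (y ≤ cumMass ν x))}
            = {y : ℝ | y ∈ Set.Ioc (0:ℝ) (k:ℝ) ∧
            ¬((y ≤ cumMass ν x) ↔ (y ≤ cumMass μ x))} := by
          ext z; simp [iff_comm]
        rw [hbase, h2, setOf_not_iff_le_Ioc _ _ _ hle (cumMass_nonneg hν0 x)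
          (cumMass_le hμ0 hμk x), Real.volume_Ioc]
        rw [abs_of_nonneg (sub_nonneg.2 hle)]
    have hswap : (∫⁻ x, ∫⁻ y, S.indicator (fun _ => (1:ENNReal)) (x, y))
        = ∫⁻ y, ∫⁻ x, S.indicator (fun _ => (1:ENNReal)) (x, y) := by
      apply lintegral_lintegral_swap
      apply Measurable.aemeasurable
      have h : Function.uncurry (fun x y => S.indicator (fun _ => (1:ENNReal)) (x, y))
          = S.indicator (fun _ => (1:ENNReal)) := by
        ext p; simp [Function.uncurry]
      rw [h]
      exact measurable_const.indicator hS
    calc ∫⁻ y in Set.Ioc (0:ℝ) (k:ℝ), ENNReal.ofReal (G y)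
        = ∫⁻ y, (Set.Ioc (0:ℝ) (k:ℝ)).indicator (fun z => ENNReal.ofReal (G z)) y :=
          (lintegral_indicator measurableSet_Ioc _).symm
      _ = ∫⁻ y, ∫⁻ x, S.indicator (fun _ => (1:ENNReal)) (x, y) :=
          lintegral_congr fun y => (yslice y).symm
      _ = ∫⁻ x, ∫⁻ y, S.indicator (fun _ => (1:ENNReal)) (x, y) := hswap.symm
      _ = ∫⁻ x, ENNReal.ofReal |cumMass μ x - cumMass ν x| :=
          lintegral_congr fun x => xslice x
  rw [stepA]
  rw [integral_eq_lintegral_of_nonneg_ae (Filter.Eventually.of_forall hGnonneg)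
    hGmeas.aestronglyMeasurable]
  rw [integral_eq_lintegral_of_nonneg_ae (f := fun x => |cumMass μ x - cumMass ν x|)
    (Filter.Eventually.of_forall (fun x => abs_nonneg _))
    ((hmμ.sub hmν).abs).aestronglyMeasurable]
  rw [stepB]
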